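/- Let ρ₀ = |0⟩⟨0| and ρ₁ = |1⟩⟨1| be orthogonal qubit states, and let A₁₂ be the channel with A₁₂(ρ₀) = |Φ⁺⟩⟨Φ⁺| and A₁₂(ρ₁) = |Φ⁻⟩⟨Φ⁻|, where |Φ^±⟩ = (|00⟩ ± |11⟩)/√2 are Bell states. Then: (1) the partial traces over either output subsystem satisfy Tr_B A₁₂(ρ₀) = Tr_B A₁₂(ρ₁) = I/2 and Tr_A A₁₂(ρ₀) = Tr_A A₁₂(ρ₁) = I/2, so each marginal channel is (0,0)-QDP; and (2) for the measurement operator M = |Φ⁺⟩⟨Φ⁺|, Tr(M A₁₂(ρ₀)) = 1 and Tr(M A₁₂(ρ₁)) = 0, so A₁₂ is not (ε,δ)-QDP for any ε ≥ 0 and δ < 1. -/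

import Mathlib

open Matrix BigOperators
open scoped ComplexOrder

namespace QDPNoGo

/-- `|0⟩` on a qubit. -/
def e0 : Fin 2 → ℂ := fun i => if i = 0 then 1 else 0
/-- `|1⟩` on a qubit. -/
def e1 : Fin 2 → ℂ := fun i => if i = 1 then 1 else 0

/-- `ρ₀ = |0⟩⟨0|`. -/
def ρ0 : Matrix (Fin 2) (Fin 2) ℂ := Matrix.vecMulVec e0 (fun j => star (e0 j))
/-- `ρ₁ = |1⟩⟨1|`. -/
def ρ1 : Matrix (Fin 2) (Fin 2) ℂ := Matrix.vecMulVec e1 (fun j => star (e1 j))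

/-- The Bell vector `|Φ⁺⟩ = (|00⟩ + |11⟩)/√2`. -/
noncomputable def bellP : Fin 2 × Fin 2 → ℂ :=
  fun p => if p.1 = p.2 then ((Real.sqrt 2)⁻¹ : ℝ) else 0

/-- The Bell vector `|Φ⁻⟩ = (|00⟩ − |11⟩)/√2`. -/
noncomputable def bellM : Fin 2 × Fin 2 → ℂ :=
  fun p =>
    if p.1 = 0 ∧ p.2 = 0 then ((Real.sqrt 2)⁻¹ : ℝ)
    else if p.1 = 1 ∧ p.2 = 1 then -((Real.sqrt 2)⁻¹ : ℝ) else 0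

/-- `|Φ⁺⟩⟨Φ⁺|`. -/
noncomputable def PhiP : Matrix (Fin 2 × Fin 2) (Fin 2 × Fin 2) ℂ :=
  Matrix.vecMulVec bellP (fun q => star (bellP q))

/-- `|Φ⁻⟩⟨Φ⁻|`. -/
noncomputable def PhiM : Matrix (Fin 2 × Fin 2) (Fin 2 × Fin 2) ℂ :=
  Matrix.vecMulVec bellM (fun q => star (bellM q))

/-- Partial trace over the second (B) subsystem. -/
noncomputable def ptrB (M : Matrix (Fin 2 × Fin 2) (Fin 2 × Fin 2) ℂ) :
    Matrix (Fin 2) (Fin 2) ℂ :=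
  Matrix.of fun i i' => ∑ j : Fin 2, M (i, j) (i', j)

/-- Partial trace over the first (A) subsystem. -/
noncomputable def ptrA (M : Matrix (Fin 2 × Fin 2) (Fin 2 × Fin 2) ℂ) :
    Matrix (Fin 2) (Fin 2) ℂ :=
  Matrix.of fun i i' => ∑ j : Fin 2, M (j, i) (j, i')


/-- Outer product `|v⟩⟨v|` is positive semidefinite. -/
lemma outer_psd {n : Type*} [Fintype n] [DecidableEq n] (v : n → ℂ) :
    (Matrix.vecMulVec v (fun j => star (v j))).PosSemidef := by
  rw [Matrix.posSemidef_iff_dotProduct_mulVec]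
  constructor
  · ext i j
    simp [Matrix.conjTranspose_apply, Matrix.vecMulVec_apply, mul_comm]
  · intro x
    have key : (Matrix.vecMulVec v (fun j => star (v j))) *ᵥ x
        = ((fun j => star (v j)) ⬝ᵥ x) • v := by
      ext i
      simp [Matrix.mulVec, Matrix.vecMulVec_apply, dotProduct, Finset.mul_sum, mul_left_comm,
        Finset.sum_mul, mul_comm, mul_assoc]
    rw [key]
    simp only [dotProduct_smul]
    have h1 : star x ⬝ᵥ v = star ((fun j => star (v j)) ⬝ᵥ x) := by
      simp [dotProduct, mul_comm]
    rw [h1, smul_eq_mul]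
    exact mul_star_self_nonneg _ |>.trans_eq (by rw [mul_comm])

noncomputable def f01 : Fin 2 × Fin 2 → ℂ := fun p => if p = (0,1) then 1 else 0
noncomputable def f10 : Fin 2 × Fin 2 → ℂ := fun p => if p = (1,0) then 1 else 0

lemma hs : (((Real.sqrt 2 : ℝ)) : ℂ)⁻¹ * (((Real.sqrt 2 : ℝ)) : ℂ)⁻¹ = 1/2 := by
  rw [← mul_inv, ← Complex.ofReal_mul, Real.mul_self_sqrt (by norm_num)]
  norm_num

lemma decompose : (1 : Matrix (Fin 2 × Fin 2) (Fin 2 × Fin 2) ℂ) - PhiP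
    = PhiM + Matrix.vecMulVec f01 (fun j => star (f01 j))
        + Matrix.vecMulVec f10 (fun j => star (f10 j)) := by
  ext p q
  obtain ⟨a,b⟩ := p; obtain ⟨c,d⟩ := q
  fin_cases a <;> fin_cases b <;> fin_cases c <;> fin_cases d <;>
    simp [PhiP, PhiM, bellP, bellM, f01, f10, Matrix.vecMulVec_apply, Matrix.one_apply,
      Prod.ext_iff] <;> norm_num [hs]

lemma trPP : (PhiP * PhiP).trace = 1 := by
  simp [Matrix.trace, Matrix.mul_apply, Fintype.sum_prod_type, Fin.sum_univ_two,
    PhiP, bellP, Matrix.vecMulVec_apply, Matrix.diag]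
  ring_nf
  rw [show (((Real.sqrt 2 : ℝ)) : ℂ)⁻¹^4 = ((((Real.sqrt 2:ℝ)):ℂ)⁻¹ * (((Real.sqrt 2:ℝ)):ℂ)⁻¹) * ((((Real.sqrt 2:ℝ)):ℂ)⁻¹ * (((Real.sqrt 2:ℝ)):ℂ)⁻¹) by ring, hs]
  norm_num

lemma trPM : (PhiP * PhiM).trace = 0 := by
  simp [Matrix.trace, Matrix.mul_apply, Fintype.sum_prod_type, Fin.sum_univ_two,
    PhiP, PhiM, bellP, bellM, Matrix.vecMulVec_apply, Matrix.diag]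

/-- **No-go for basic composition under POVM-QDP.**
For the joint channel `A₁₂` with `A₁₂(ρ₀) = |Φ⁺⟩⟨Φ⁺|` and
`A₁₂(ρ₁) = |Φ⁻⟩⟨Φ⁻|`: (1) both marginals of both outputs equal `I/2`
(so each marginal channel is `(0,0)`-QDP), and (2) for the measurement
operator `M = |Φ⁺⟩⟨Φ⁺|` we get `Tr(M A₁₂(ρ₀)) = 1` and
`Tr(M A₁₂(ρ₁)) = 0`, so `A₁₂` is not `(ε,δ)`-QDP for any `ε ≥ 0`, `δ < 1`
with respect to the neighboring relation `ρ₀ ∼ ρ₁`. -/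
theorem no_go_basic_composition
    (A : Matrix (Fin 2) (Fin 2) ℂ → Matrix (Fin 2 × Fin 2) (Fin 2 × Fin 2) ℂ)
    (hA0 : A ρ0 = PhiP) (hA1 : A ρ1 = PhiM) :
    (ptrB (A ρ0) = (2 : ℂ)⁻¹ • 1 ∧ ptrB (A ρ1) = (2 : ℂ)⁻¹ • 1 ∧
     ptrA (A ρ0) = (2 : ℂ)⁻¹ • 1 ∧ ptrA (A ρ1) = (2 : ℂ)⁻¹ • 1) ∧
    ((PhiP * A ρ0).trace = 1 ∧ (PhiP * A ρ1).trace = 0) ∧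
    (∀ ε δ : ℝ, 0 ≤ ε → 0 ≤ δ → δ < 1 →
      ¬ (∀ M : Matrix (Fin 2 × Fin 2) (Fin 2 × Fin 2) ℂ,
          M.PosSemidef → (1 - M).PosSemidef →
          ((M * A ρ0).trace.re ≤ Real.exp ε * (M * A ρ1).trace.re + δ ∧
           (M * A ρ1).trace.re ≤ Real.exp ε * (M * A ρ0).trace.re + δ))) := by
  refine ⟨⟨?_, ?_, ?_, ?_⟩, ⟨?_, ?_⟩, ?_⟩
  · rw [hA0]; ext i j
    fin_cases i <;> fin_cases j <;>
      simp [ptrB, PhiP, bellP, Matrix.vecMulVec_apply, Fin.sum_univ_two, Matrix.one_apply] <;> norm_num [hs]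
  · rw [hA1]; ext i j
    fin_cases i <;> fin_cases j <;>
      simp [ptrB, PhiM, bellM, Matrix.vecMulVec_apply, Fin.sum_univ_two, Matrix.one_apply] <;> norm_num [hs]
  · rw [hA0]; ext i j
    fin_cases i <;> fin_cases j <;>
      simp [ptrA, PhiP, bellP, Matrix.vecMulVec_apply, Fin.sum_univ_two, Matrix.one_apply] <;> norm_num [hs]
  · rw [hA1]; ext i j
    fin_cases i <;> fin_cases j <;>
      simp [ptrA, PhiM, bellM, Matrix.vecMulVec_apply, Fin.sum_univ_two, Matrix.one_apply] <;> norm_num [hs]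
  · rw [hA0]; exact trPP
  · rw [hA1]; exact trPM
  · intro ε δ hε hδ hδ1 h
    have psd1 : PhiP.PosSemidef := outer_psd bellP
    have psd2 : ((1 : Matrix (Fin 2 × Fin 2) (Fin 2 × Fin 2) ℂ) - PhiP).PosSemidef := by
      rw [decompose]
      exact ((outer_psd bellM).add (outer_psd f01)).add (outer_psd f10)
    obtain ⟨h1, -⟩ := h PhiP psd1 psd2
    rw [hA0, hA1, trPP, trPM] at h1
    simp at h1
    linarith

end QDPNoGo
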